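/- (Corollary 5.1(i), two decision makers: global optimality is equivalent across the control-sharing, static, and dynamic formulations.) Let (γ₁*, δ̃₂*) be a control-sharing static policy, and define δ₂*(y, s) := δ̃₂*(y, γ₁*(y), s) and γ₂*(y, t) := δ₂*(y, g⁻(t, γ₁*(y))). Then the following are equivalent: (a) (γ₁*, δ̃₂*) is globally optimal for J^{CS} (i.e., J^{CS}(γ₁*, δ̃₂*) ≤ J^{CS}(γ₁, δ₂^{cs}) for all measurable γ₁ : Y₁ → U₁ and δ₂^{cs} : Y₁ × U₁ × Ŷ → U₂); (b) (γ₁*, δ₂*) is globally optimal for J^S; (c) (γ₁*, γ₂*) is globally optimal for J^D. Moreover J^{CS}(γ₁*, δ̃₂*) = J^S(γ₁*, δ₂*) = J^D(γ₁*, γ₂*). -/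
import Mathlib


open MeasureTheory
open scoped ENNReal

/-- **Corollary 5.1(i) (two decision makers): global optimality is equivalent across the
control-sharing, static, and dynamic formulations.** Given a control-sharing static
policy `(γ₁s, δ₂cs)`, set `δ₂s (y, s) := δ₂cs (y, γ₁s y, s)` and
`γ₂s (y, t) := δ₂s (y, ginv (t, γ₁s y))`. Then `(γ₁s, δ₂cs)` is globally optimal for
`JCS` iff `(γ₁s, δ₂s)` is globally optimal for `JS` iff `(γ₁s, γ₂s)` is globally optimal
for `JD`; moreover the three costs coincide. -/
theorem corollary51_global_optimality_equivalences
    {Ω Ω₀ Y₁ Yh Yh' U₁ U₂ : Type*}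
    [MeasurableSpace Ω] [MeasurableSpace Ω₀] [MeasurableSpace Y₁]
    [MeasurableSpace Yh] [MeasurableSpace Yh'] [MeasurableSpace U₁] [MeasurableSpace U₂]
    (P : Measure Ω) [IsProbabilityMeasure P]
    (ω₀ : Ω → Ω₀) (y₁ : Ω → Y₁) (yhat₂ : Ω → Yh)
    (hω₀ : Measurable ω₀) (hy₁ : Measurable y₁) (hyhat₂ : Measurable yhat₂)
    (g : Yh × U₁ → Yh') (ginv : Yh' × U₁ → Yh)
    (hg : Measurable g) (hginv : Measurable ginv)
    (hgl : ∀ (s : Yh) (u : U₁), ginv (g (s, u), u) = s)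
    (hgr : ∀ (t : Yh') (u : U₁), g (ginv (t, u), u) = t)
    (c : Ω₀ × U₁ × U₂ → ℝ≥0∞) (hc : Measurable c)
    (JD : (Y₁ → U₁) → (Y₁ × Yh' → U₂) → ℝ≥0∞)
    (JS : (Y₁ → U₁) → (Y₁ × Yh → U₂) → ℝ≥0∞)
    (JCS : (Y₁ → U₁) → (Y₁ × U₁ × Yh → U₂) → ℝ≥0∞)
    (hJD : ∀ γ₁ γ₂, JD γ₁ γ₂
      = ∫⁻ ω, c (ω₀ ω, γ₁ (y₁ ω), γ₂ (y₁ ω, g (yhat₂ ω, γ₁ (y₁ ω)))) ∂P)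
    (hJS : ∀ γ₁ δ₂, JS γ₁ δ₂
      = ∫⁻ ω, c (ω₀ ω, γ₁ (y₁ ω), δ₂ (y₁ ω, yhat₂ ω)) ∂P)
    (hJCS : ∀ γ₁ δ₂cs, JCS γ₁ δ₂cs
      = ∫⁻ ω, c (ω₀ ω, γ₁ (y₁ ω), δ₂cs (y₁ ω, γ₁ (y₁ ω), yhat₂ ω)) ∂P)
    (γ₁s : Y₁ → U₁) (δ₂cs : Y₁ × U₁ × Yh → U₂)
    (hγ₁s : Measurable γ₁s) (hδ₂cs : Measurable δ₂cs) :
    -- (a) ↔ (b)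
    ((∀ (γ₁ : Y₁ → U₁) (β : Y₁ × U₁ × Yh → U₂), Measurable γ₁ → Measurable β →
        JCS γ₁s δ₂cs ≤ JCS γ₁ β)
      ↔ (∀ (γ₁ : Y₁ → U₁) (δ₂ : Y₁ × Yh → U₂), Measurable γ₁ → Measurable δ₂ →
          JS γ₁s (fun p => δ₂cs (p.1, γ₁s p.1, p.2)) ≤ JS γ₁ δ₂))
    -- (b) ↔ (c)
    ∧ ((∀ (γ₁ : Y₁ → U₁) (δ₂ : Y₁ × Yh → U₂), Measurable γ₁ → Measurable δ₂ →
          JS γ₁s (fun p => δ₂cs (p.1, γ₁s p.1, p.2)) ≤ JS γ₁ δ₂)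
      ↔ (∀ (γ₁ : Y₁ → U₁) (γ₂ : Y₁ × Yh' → U₂), Measurable γ₁ → Measurable γ₂ →
          JD γ₁s (fun p => δ₂cs (p.1, γ₁s p.1, ginv (p.2, γ₁s p.1))) ≤ JD γ₁ γ₂))
    -- the three expected costs coincide
    ∧ JCS γ₁s δ₂cs = JS γ₁s (fun p => δ₂cs (p.1, γ₁s p.1, p.2))
    ∧ JS γ₁s (fun p => δ₂cs (p.1, γ₁s p.1, p.2))
        = JD γ₁s (fun p => δ₂cs (p.1, γ₁s p.1, ginv (p.2, γ₁s p.1))) := by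

  have hCS_S : JCS γ₁s δ₂cs = JS γ₁s (fun p => δ₂cs (p.1, γ₁s p.1, p.2)) := by
    rw [hJCS, hJS]
  have hS_D : JS γ₁s (fun p => δ₂cs (p.1, γ₁s p.1, p.2))
      = JD γ₁s (fun p => δ₂cs (p.1, γ₁s p.1, ginv (p.2, γ₁s p.1))) := by
    rw [hJS, hJD]; simp only [hgl]
  refine ⟨?_, ?_, hCS_S, hS_D⟩
  · constructor
    · intro h γ₁ δ₂ hγ₁ hδ₂
      have := h γ₁ (fun p => δ₂ (p.1, p.2.2)) hγ₁
        (hδ₂.comp (measurable_fst.prodMk (measurable_snd.comp measurable_snd)))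
      rw [hCS_S] at this
      refine le_trans this (le_of_eq ?_)
      rw [hJCS, hJS]
    · intro h γ₁ β hγ₁ hβ
      have := h γ₁ (fun p => β (p.1, γ₁ p.1, p.2)) hγ₁
        (hβ.comp (measurable_fst.prodMk
          ((hγ₁.comp measurable_fst).prodMk measurable_snd)))
      rw [hCS_S]
      refine le_trans this (le_of_eq ?_)
      rw [hJCS, hJS]
  · constructor
    · intro h γ₁ γ₂ hγ₁ hγ₂
      have := h γ₁ (fun p => γ₂ (p.1, g (p.2, γ₁ p.1))) hγ₁
        (hγ₂.comp (measurable_fst.prodMk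
          (hg.comp (measurable_snd.prodMk (hγ₁.comp measurable_fst)))))
      rw [hS_D] at this
      refine le_trans this (le_of_eq ?_)
      rw [hJS, hJD]
    · intro h γ₁ δ₂ hγ₁ hδ₂
      have := h γ₁ (fun p => δ₂ (p.1, ginv (p.2, γ₁ p.1))) hγ₁
        (hδ₂.comp (measurable_fst.prodMk
          (hginv.comp (measurable_snd.prodMk (hγ₁.comp measurable_fst)))))
      rw [hS_D]
      refine le_trans this (le_of_eq ?_)
      rw [hJS, hJD]; simp only [hgl]
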